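/- Let G = (V,E) be a graph. For any vector x ∈ [0,1]^V, Σ_{{u,v}∈E} min(x_u, x_v) = min_{σ} Σ_{v∈V} x_v·q(σ)_v, where the minimum is over all permutations σ of V; moreover, any permutation σ that orders the vertices in nonincreasing order of the values x_v attains this minimum. -/

import Mathlib

open scoped Classical

/-- `q(σ)_v`: the number of edges `{u,v}` of `G` with `u` preceding `v` in the
permutation `σ` (where `u` precedes `v` iff `σ u < σ v`). -/
noncomputable def qPerm {n : ℕ} (G : SimpleGraph (Fin n)) (σ : Equiv.Perm (Fin n))
    (v : Fin n) : ℕ :=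
  (Finset.univ.filter fun u => G.Adj u v ∧ σ u < σ v).card


section Aux
variable {n : ℕ} (G : SimpleGraph (Fin n)) [DecidableRel G.Adj]
    (x : Fin n → ℝ) (σ : Equiv.Perm (Fin n))

private lemma lateSymm : ∀ a b : Fin n,
    (if σ a < σ b then x b else x a) = (if σ b < σ a then x a else x b) := by
  intro a b
  rcases lt_trichotomy (σ a) (σ b) with h | h | h
  · simp [h, not_lt.2 h.le]
  · have : a = b := σ.injective h
    subst this; simp
  · simp [h, not_lt.2 h.le]

lemma qPerm_sum :
    ∑ v, x v * (qPerm G σ v : ℝ) =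
      ∑ e ∈ G.edgeFinset,
        Sym2.lift ⟨fun u v => if σ u < σ v then x v else x u, lateSymm x σ⟩ e := by
  classical
  set S : Finset (Fin n × Fin n) :=
    Finset.univ.filter (fun p => G.Adj p.1 p.2 ∧ σ p.1 < σ p.2) with hS
  have h1 : ∑ v, x v * (qPerm G σ v : ℝ) = ∑ p ∈ S, x p.2 := by
    have : ∀ v, x v * (qPerm G σ v : ℝ)
        = ∑ u ∈ Finset.univ.filter (fun u => G.Adj u v ∧ σ u < σ v), x v := by
      intro v
      rw [Finset.sum_const, nsmul_eq_mul, mul_comm, qPerm]; congr!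
    simp only [this, Finset.sum_filter, hS, Fintype.sum_prod_type]
    exact Finset.sum_comm
  have h2 : ∑ e ∈ G.edgeFinset,
      Sym2.lift ⟨fun u v => if σ u < σ v then x v else x u, lateSymm x σ⟩ e
      = ∑ p ∈ S, x p.2 := by
    refine (Finset.sum_bij (fun p _ => s(p.1, p.2)) ?_ ?_ ?_ ?_).symm
    · intro p hp
      simp only [hS, Finset.mem_filter] at hp
      exact SimpleGraph.mem_edgeFinset.2 hp.2.1
    · intro p hp q hq h
      simp only [hS, Finset.mem_filter] at hp hq
      rw [Sym2.mk_eq_mk_iff] at h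
      rcases h with h | h
      · exact Prod.ext (congrArg Prod.fst h) (congrArg Prod.snd h)
      · simp only [Prod.ext_iff, Prod.fst_swap, Prod.snd_swap] at h
        exfalso
        have := hp.2.2
        rw [h.1, h.2] at this
        exact absurd hq.2.2 (not_lt.2 this.le)
    · intro e he
      induction e using Sym2.ind with
      | _ u v =>
        have hadj : G.Adj u v := SimpleGraph.mem_edgeFinset.1 he
        have hne : σ u ≠ σ v := fun h => hadj.ne (σ.injective h)
        rcases hne.lt_or_gt with h | h
        · exact ⟨(u, v), by simp [hS, hadj, h], rfl⟩
        · exact ⟨(v, u), by simp [hS, hadj.symm, h], Sym2.eq_swap⟩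
    · intro p hp
      obtain ⟨u, v⟩ := p
      simp only [hS, Finset.mem_filter] at hp
      simp [hp.2.2]
  rw [h1, h2]

end Aux

/-- **Optimal ordering lemma.** For any `x ∈ [0,1]^V`,
`Σ_{{u,v}∈E} min(x_u, x_v) = min_σ Σ_v x_v·q(σ)_v`: every permutation gives at least the
left-hand side, some permutation orders the vertices in nonincreasing order of `x`, and
every permutation ordering the vertices in nonincreasing order of `x` attains equality. -/
theorem min_over_orderings {n : ℕ} (G : SimpleGraph (Fin n)) [DecidableRel G.Adj]
    (x : Fin n → ℝ) (hx0 : ∀ v, 0 ≤ x v) (hx1 : ∀ v, x v ≤ 1) :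
    (∀ σ : Equiv.Perm (Fin n),
      (∑ e ∈ G.edgeFinset,
          Sym2.lift ⟨fun u v => min (x u) (x v), fun a b => min_comm (x a) (x b)⟩ e) ≤
        ∑ v, x v * (qPerm G σ v : ℝ)) ∧
    (∃ σ : Equiv.Perm (Fin n), ∀ u v : Fin n, σ u < σ v → x v ≤ x u) ∧
    (∀ σ : Equiv.Perm (Fin n), (∀ u v : Fin n, σ u < σ v → x v ≤ x u) →
      (∑ e ∈ G.edgeFinset,
          Sym2.lift ⟨fun u v => min (x u) (x v), fun a b => min_comm (x a) (x b)⟩ e) =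
        ∑ v, x v * (qPerm G σ v : ℝ)) := by
  classical
  refine ⟨?_, ?_, ?_⟩
  · intro σ
    rw [qPerm_sum G x σ]
    apply Finset.sum_le_sum
    intro e he
    induction e using Sym2.ind with
    | _ u v =>
      simp only [Sym2.lift_mk]
      split
      · exact min_le_right _ _
      · exact min_le_left _ _
  · refine ⟨(Tuple.sort (fun i => -x i))⁻¹, fun u v h => ?_⟩
    have hm := Tuple.monotone_sort (fun i => -x i)
    have := hm h.le
    simp only [Function.comp_apply, Equiv.Perm.inv_def, Equiv.apply_symm_apply, neg_le_neg_iff] at this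
    linarith
  · intro σ hσ
    rw [qPerm_sum G x σ]
    apply Finset.sum_congr rfl
    intro e he
    induction e using Sym2.ind with
    | _ u v =>
      have hadj := SimpleGraph.mem_edgeFinset.1 he
      have hne : σ u ≠ σ v := fun h => hadj.ne (σ.injective h)
      simp only [Sym2.lift_mk]
      rcases hne.lt_or_gt with h | h
      · rw [if_pos h, min_eq_right (hσ u v h)]
      · rw [if_neg (not_lt.2 h.le), min_eq_left (hσ v u h)]
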